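/- Let X be a topological space, T : X → X continuous, μ a T-invariant Borel probability measure, and φ : X → ℝ upper semi-continuous and μ-integrable with ∫ φ dμ = 0. Suppose γ := sup over n ≥ 1 and x ∈ X of the Birkhoff sum S_n φ(x) is finite. Then for every n ≥ 1 and every x in the support of μ, S_n φ(x) ≥ -γ. -/

import Mathlib

open MeasureTheory Filter Topology

/-- Morris: if `∫ φ dμ = 0` and all Birkhoff sums of the upper
semi-continuous function `φ` are bounded above by `γ`, then all Birkhoff sums
along points of the support of `μ` are bounded below by `-γ`. -/
theorem stmt1 {X : Type*} [TopologicalSpace X] [MeasurableSpace X] [BorelSpace X]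
    (T : X → X) (hT : Continuous T)
    (μ : Measure X) [IsProbabilityMeasure μ] (hμ : μ.map T = μ)
    (φ : X → ℝ) (hφ : UpperSemicontinuous φ) (hint : Integrable φ μ)
    (h0 : ∫ x, φ x ∂μ = 0)
    (γ : ℝ)
    (hγ : ∀ n : ℕ, 1 ≤ n → ∀ x : X, ∑ k ∈ Finset.range n, φ (T^[k] x) ≤ γ) :
    ∀ n : ℕ, 1 ≤ n → ∀ x : X,
      (∀ U : Set X, IsOpen U → x ∈ U → 0 < μ U) →
      -γ ≤ ∑ k ∈ Finset.range n, φ (T^[k] x) := by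
  intro n hn x hx
  by_contra hlt
  push_neg at hlt
  classical
  set S : ℕ → X → ℝ := fun M y => ∑ k ∈ Finset.range M, φ (T^[k] y) with hS
  change S n x < -γ at hlt
  have hTm : Measurable T := hT.measurable
  have hMP : MeasurePreserving T μ μ := ⟨hTm, hμ⟩
  have hMPk : ∀ k : ℕ, MeasurePreserving (T^[k]) μ μ := fun k => hMP.iterate k
  have hφm : Measurable φ := hφ.measurable
  have hγ0 : 0 ≤ γ := by
    have h1 : ∀ y, φ y ≤ γ := fun y => by simpa using hγ 1 le_rfl y
    have := integral_mono hint (integrable_const γ) h1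
    simpa [h0] using this
  have hSle : ∀ M y, S M y ≤ γ := by
    intro M y
    rcases Nat.eq_zero_or_pos M with h | h
    · simp [hS, h, hγ0]
    · exact hγ M h y
  have hcoc : ∀ a b y, S (a + b) y = S a y + S b (T^[a] y) := by
    intro a b y
    simp only [hS]
    rw [Finset.sum_range_add]
    congr 1
    refine Finset.sum_congr rfl fun k _ => ?_
    rw [← Function.iterate_add_apply, Nat.add_comm a k]
  set ε : ℝ := (-γ - S n x) / 2 with hεdef
  have hε : 0 < ε := by simp only [hεdef]; linarith
  set U : Set X := {y | S n y < -γ - ε} with hU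
  have hUopen : IsOpen U := by
    have hSusc : UpperSemicontinuous (S n) := by
      apply upperSemicontinuous_sum
      intro k _
      exact hφ.comp (hT.iterate k)
    rw [isOpen_iff_mem_nhds]
    intro y hy
    have := hSusc y (-γ - ε) hy
    filter_upwards [this] with z hz using hz
  have hxU : x ∈ U := by
    simp only [hU, Set.mem_setOf_eq, hεdef]
    linarith
  have hUpos : 0 < μ U := hx U hUopen hxU
  -- the key induction: many returns to U force small Birkhoff sums
  have key : ∀ k : ℕ, ∀ y : X, (∃ᶠ m in atTop, T^[m] y ∈ U) →
      ∃ N₀ : ℕ, ∀ M, N₀ ≤ M → S M y ≤ γ - k * ε := by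
    intro k
    induction k with
    | zero => exact fun y _ => ⟨0, fun M _ => by simpa using hSle M y⟩
    | succ k ih =>
      intro y hy
      obtain ⟨m, -, hm⟩ := (frequently_atTop.mp hy) 0
      have hz : ∃ᶠ j in atTop, T^[j] (T^[m + n] y) ∈ U := by
        rw [frequently_atTop] at hy ⊢
        intro a
        obtain ⟨b, hb, hbU⟩ := hy (a + (m + n))
        refine ⟨b - (m + n), by omega, ?_⟩
        rw [← Function.iterate_add_apply]
        have hbeq : b - (m + n) + (m + n) = b := by omega
        rw [hbeq]; exact hbU
      obtain ⟨N₀, hN₀⟩ := ih (T^[m + n] y) hz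
      refine ⟨m + n + N₀, fun M hM => ?_⟩
      have hMdec : M = m + n + (M - (m + n)) := by omega
      have h1 : S M y = S m y + S n (T^[m] y) + S (M - (m + n)) (T^[m + n] y) := by
        calc S M y = S (m + n + (M - (m + n))) y := by rw [← hMdec]
          _ = S (m + n) y + S (M - (m + n)) (T^[m + n] y) := hcoc _ _ _
          _ = S m y + S n (T^[m] y) + S (M - (m + n)) (T^[m + n] y) := by rw [hcoc m n y]
      have h2 : S n (T^[m] y) ≤ -γ - ε := le_of_lt hm
      have h3 : S (M - (m + n)) (T^[m + n] y) ≤ γ - k * ε := hN₀ _ (by omega)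
      have h4 : S m y ≤ γ := hSle m y
      rw [h1]
      push_cast
      linarith
  have htend : ∀ y : X, (∃ᶠ m in atTop, T^[m] y ∈ U) →
      Tendsto (fun M => S M y) atTop atBot := by
    intro y hy
    rw [tendsto_atBot]
    intro b
    obtain ⟨k, hk⟩ := exists_nat_ge ((γ - b) / ε)
    obtain ⟨N₀, hN₀⟩ := key k y hy
    filter_upwards [eventually_ge_atTop N₀] with M hM
    have h1 := hN₀ M hM
    have h2 : γ - b ≤ k * ε := by
      rw [div_le_iff₀ hε] at hk; linarith
    linarith
  -- integrals
  have hSintk : ∀ k : ℕ, Integrable (fun y => φ (T^[k] y)) μ :=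
    fun k => ((hMPk k).integrable_comp hφm.aestronglyMeasurable).mpr hint
  have hSint : ∀ M, Integrable (S M) μ := fun M =>
    integrable_finset_sum _ fun k _ => hSintk k
  have hSzero : ∀ M, ∫ y, S M y ∂μ = 0 := by
    intro M
    simp only [hS]
    rw [integral_finset_sum _ fun k _ => hSintk k]
    have hk : ∀ k : ℕ, ∫ y, φ (T^[k] y) ∂μ = 0 := by
      intro k
      rw [← integral_map (hMPk k).measurable.aemeasurable
        (hφm.aestronglyMeasurable.mono_measure (le_of_eq (hMPk k).map_eq)),
        (hMPk k).map_eq, h0]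
    simp [hk]
  set F : ℕ → X → ENNReal := fun M y => ENNReal.ofReal (γ - S M y) with hF
  have hFmeas : ∀ M, Measurable (F M) := by
    intro M
    apply ENNReal.measurable_ofReal.comp
    apply Measurable.const_sub
    exact Finset.measurable_sum _ fun k _ => hφm.comp (hMPk k).measurable
  have hFint : ∀ M, ∫⁻ y, F M y ∂μ = ENNReal.ofReal γ := by
    intro M
    have hGint : Integrable (fun y => γ - S M y) μ := (integrable_const γ).sub (hSint M)
    rw [← ofReal_integral_eq_lintegral_ofReal hGint
      (ae_of_all _ fun y => sub_nonneg.2 (hSle M y))]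
    rw [integral_sub (integrable_const γ) (hSint M), hSzero M, integral_const]
    simp
  have hFatou : ∫⁻ y, liminf (fun M => F M y) atTop ∂μ ≤ ENNReal.ofReal γ := by
    refine le_trans (lintegral_liminf_le hFmeas) ?_
    simp [hFint, liminf_const]
  have hCons : Conservative T μ := hMP.conservative
  have hae : ∀ᵐ y ∂μ, y ∈ U → liminf (fun M => F M y) atTop = ⊤ := by
    filter_upwards [hCons.ae_mem_imp_frequently_image_mem
      hUopen.measurableSet.nullMeasurableSet] with y hy hyU
    have hfr := hy hyU
    have h1 : Tendsto (fun M => γ - S M y) atTop atTop := by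
      rw [tendsto_atTop]
      intro b
      filter_upwards [(tendsto_atBot.mp (htend y hfr)) (γ - b)] with M hM
      linarith
    have h2 : Tendsto (fun M => F M y) atTop (𝓝 ⊤) :=
      ENNReal.tendsto_ofReal_atTop.comp h1
    exact h2.liminf_eq
  have hlow : (⊤ : ENNReal) ≤ ∫⁻ y, liminf (fun M => F M y) atTop ∂μ := by
    have h1 : ∫⁻ y in U, liminf (fun M => F M y) atTop ∂μ
        = ∫⁻ _ in U, (⊤ : ENNReal) ∂μ := by
      refine setLIntegral_congr_fun_ae hUopen.measurableSet ?_
      filter_upwards [hae] with y hy hyU using hy hyU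
    have h2 : ∫⁻ _ in U, (⊤ : ENNReal) ∂μ = ⊤ := by
      rw [setLIntegral_const, ENNReal.top_mul hUpos.ne']
    calc (⊤ : ENNReal) = ∫⁻ y in U, liminf (fun M => F M y) atTop ∂μ := by rw [h1, h2]
      _ ≤ _ := setLIntegral_le_lintegral _ _
  have : (⊤ : ENNReal) ≤ ENNReal.ofReal γ := le_trans hlow hFatou
  simp at this
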